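/- Let A be the 5×5 matrix with rows (0,0,1,0,0), (1,0,−1,1,0), (0,0,1,−1,1), (0,0,0,1,0), (0,1,0,0,0), viewed over ℚ. Then A is an alternating sign matrix, A^6 = I_5, the characteristic polynomial of A is (x−1)^2(x+1)(x^2−x+1), the minimum polynomial of A is (x−1)(x+1)(x^2−x+1), and A is not similar over ℚ to any 5×5 permutation matrix. -/

import Mathlib

open Polynomial

/-- `Ccyc k` is the `k × k` companion matrix of `x^k - 1`: the permutation matrix with `1`
in (1-based) positions `(i+1, i)` for `1 ≤ i ≤ k-1` and in position `(1, k)`. -/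
def Ccyc (k : ℕ) : Matrix (Fin k) (Fin k) ℚ :=
  Matrix.of fun r c => if (r : ℕ) = ((c : ℕ) + 1) % k then 1 else 0

/-- `Tblock n i1 j1 i2 j2` is the `n × n` matrix with entry `1` in (1-based) positions
`(i1, j1)` and `(i2, j2)`, entry `-1` in positions `(i1, j2)` and `(i2, j1)`, and `0`
elsewhere. -/
def Tblock (n i1 j1 i2 j2 : ℕ) : Matrix (Fin n) (Fin n) ℚ :=
  Matrix.of fun r c =>
    (if (r : ℕ) + 1 = i1 ∧ (c : ℕ) + 1 = j1 then (1 : ℚ) else 0)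
      + (if (r : ℕ) + 1 = i2 ∧ (c : ℕ) + 1 = j2 then (1 : ℚ) else 0)
      - (if (r : ℕ) + 1 = i1 ∧ (c : ℕ) + 1 = j2 then (1 : ℚ) else 0)
      - (if (r : ℕ) + 1 = i2 ∧ (c : ℕ) + 1 = j1 then (1 : ℚ) else 0)

/-- Matrix direct sum (block diagonal sum), realized on `Fin (p + q)`. -/
def dsum {p q : ℕ} (A : Matrix (Fin p) (Fin p) ℚ) (B : Matrix (Fin q) (Fin q) ℚ) :
    Matrix (Fin (p + q)) (Fin (p + q)) ℚ :=
  Matrix.reindex finSumFinEquiv finSumFinEquiv (Matrix.fromBlocks A 0 0 B)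

/-- A square rational matrix has finite multiplicative order if `A ^ t = 1` for some `t > 0`. -/
def HasFinOrder {n : ℕ} (A : Matrix (Fin n) (Fin n) ℚ) : Prop :=
  ∃ t : ℕ, 0 < t ∧ A ^ t = 1

/-- `OrderIs A t` : `t` is the least positive integer with `A ^ t = 1`. -/
def OrderIs {n : ℕ} (A : Matrix (Fin n) (Fin n) ℚ) (t : ℕ) : Prop :=
  IsLeast {s : ℕ | 0 < s ∧ A ^ s = 1} t

/-- Alternating sign matrix: entries in `{0, 1, -1}`, all partial row- and column-sums equal
`0` or `1`, and every full row and column sums to `1`. -/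
def IsASM {n : ℕ} (A : Matrix (Fin n) (Fin n) ℚ) : Prop :=
  (∀ i j : Fin n, A i j = 0 ∨ A i j = 1 ∨ A i j = -1) ∧
  (∀ i k : Fin n, (∑ j ∈ Finset.Iic k, A i j) = 0 ∨ (∑ j ∈ Finset.Iic k, A i j) = 1) ∧
  (∀ j k : Fin n, (∑ i ∈ Finset.Iic k, A i j) = 0 ∨ (∑ i ∈ Finset.Iic k, A i j) = 1) ∧
  (∀ i : Fin n, (∑ j, A i j) = 1) ∧
  (∀ j : Fin n, (∑ i, A i j) = 1)

/-- Permutation matrix. -/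
def IsPermMat {n : ℕ} (A : Matrix (Fin n) (Fin n) ℚ) : Prop :=
  ∃ σ : Equiv.Perm (Fin n), ∀ i j, A i j = if σ i = j then 1 else 0

/-- `A` is permutation similar to an alternating sign matrix:
`Pᵀ * A * P` is an ASM for some permutation matrix `P`. -/
def PermSimilarToASM {n : ℕ} (A : Matrix (Fin n) (Fin n) ℚ) : Prop :=
  ∃ P B : Matrix (Fin n) (Fin n) ℚ, IsPermMat P ∧ IsASM B ∧ B = P.transpose * A * P

/-- Similarity over `ℚ`. -/
def SimilarQ {n : ℕ} (A B : Matrix (Fin n) (Fin n) ℚ) : Prop :=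
  ∃ S : Matrix (Fin n) (Fin n) ℚ, IsUnit S ∧ B = S⁻¹ * A * S

/-- A `T`-block: a matrix of the form `± T(i1, j1, i2, j2)` with `i1 ≠ i2`, `j1 ≠ j2`. -/
def IsTBlock {n : ℕ} (M : Matrix (Fin n) (Fin n) ℚ) : Prop :=
  ∃ i1 j1 i2 j2 : ℕ, 1 ≤ i1 ∧ i1 ≤ n ∧ 1 ≤ j1 ∧ j1 ≤ n ∧ 1 ≤ i2 ∧ i2 ≤ n ∧ 1 ≤ j2 ∧ j2 ≤ n ∧
    i1 ≠ i2 ∧ j1 ≠ j2 ∧ (M = Tblock n i1 j1 i2 j2 ∨ M = -Tblock n i1 j1 i2 j2)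

lemma aux15_perm_mul {n : ℕ} {f g : Fin n → Fin n} {M N : Matrix (Fin n) (Fin n) ℚ}
    (hM : ∀ i j, M i j = if f i = j then 1 else 0)
    (hN : ∀ i j, N i j = if g i = j then 1 else 0) :
    ∀ i j, (M * N) i j = if g (f i) = j then 1 else 0 := by
  intro i j
  simp only [Matrix.mul_apply, hM, hN, ite_mul, one_mul, zero_mul]
  simp [Finset.sum_ite_eq]

lemma aux15_dvd_minpoly {n : ℕ} {A : Matrix (Fin n) (Fin n) ℚ} {q : ℚ[X]}
    (hq : Irreducible q) (h : ¬ IsUnit (Polynomial.aeval A q)) : q ∣ minpoly ℚ A := by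
  rcases EuclideanDomain.dvd_or_coprime q (minpoly ℚ A) hq with h1 | h1
  · exact h1
  · exfalso
    apply h
    obtain ⟨u, v, huv⟩ := h1
    have h2 : aeval A u * aeval A q = 1 := by
      have h3 := congrArg (aeval A) huv
      simpa [minpoly.aeval] using h3
    have h3 : aeval A q * aeval A u = 1 := by
      rw [← map_mul, mul_comm, map_mul, h2]
    exact ⟨⟨aeval A q, aeval A u, h3, h2⟩, rfl⟩

lemma aux15_q3_irr : Irreducible (X ^ 2 - X + 1 : ℚ[X]) := by
  have hdeg : (X ^ 2 - X + 1 : ℚ[X]).natDegree = 2 := by compute_degree!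
  rw [irreducible_iff_roots_eq_zero_of_degree_le_three (by rw [hdeg]) (by rw [hdeg]; norm_num)]
  rw [Multiset.eq_zero_iff_forall_notMem]
  intro a ha
  rw [Polynomial.mem_roots'] at ha
  obtain ⟨-, ha⟩ := ha
  rw [Polynomial.IsRoot.def] at ha
  simp only [eval_add, eval_sub, eval_pow, eval_X, eval_one] at ha
  nlinarith [sq_nonneg (2 * a - 1)]


set_option maxHeartbeats 2000000 in
theorem stmt15 (A : Matrix (Fin 5) (Fin 5) ℚ)
    (hA : A = !![0, 0, 1, 0, 0;
                 1, 0, -1, 1, 0;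
                 0, 0, 1, -1, 1;
                 0, 0, 0, 1, 0;
                 0, 1, 0, 0, 0]) :
    IsASM A ∧ A ^ 6 = 1 ∧
      Matrix.charpoly A = (X - 1) ^ 2 * (X + 1) * (X ^ 2 - X + 1) ∧
      minpoly ℚ A = (X - 1) * (X + 1) * (X ^ 2 - X + 1) ∧
      ¬ ∃ B : Matrix (Fin 5) (Fin 5) ℚ, IsPermMat B ∧ SimilarQ A B := by
  have h2 : A ^ 2 = !![0,0,1,-1,1; 0,0,0,2,-1; 0,1,1,-2,1; 0,0,0,1,0; 1,0,-1,1,0] := by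
    rw [pow_two, hA]
    ext i j
    fin_cases i <;> fin_cases j <;> norm_num [Matrix.mul_apply, Fin.sum_univ_succ]
  have h3 : A ^ 3 = !![0,1,1,-2,1; 0,-1,0,2,0; 1,1,0,-2,1; 0,0,0,1,0; 0,0,0,2,-1] := by
    rw [pow_succ, h2, hA]
    ext i j
    fin_cases i <;> fin_cases j <;> norm_num [Matrix.mul_apply, Fin.sum_univ_succ]
  have h6 : A ^ 6 = 1 := by
    rw [show (6:ℕ) = 3 * 2 from rfl, pow_mul, h3, pow_two]
    ext i j
    fin_cases i <;> fin_cases j <;>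
      norm_num [Matrix.mul_apply, Fin.sum_univ_succ, Matrix.one_apply, Fin.ext_iff]
  -- ASM
  have hasm : IsASM A := by
    refine ⟨?_, ?_, ?_, ?_, ?_⟩
    · intro i j
      simp only [hA]
      fin_cases i <;> fin_cases j <;> norm_num
    · intro i k
      rw [← Finset.univ_inter (Finset.Iic k), ← Finset.sum_ite_mem]
      simp only [hA]
      fin_cases i <;> fin_cases k <;>
        norm_num [Fin.sum_univ_five, Finset.mem_Iic, Fin.le_def, Matrix.vecHead,
          Matrix.vecTail, Matrix.cons_val_two, Matrix.cons_val_three, Matrix.cons_val_four, show ((3:Fin 5):ℕ) = 3 from rfl, show ((4:Fin 5):ℕ) = 4 from rfl]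
    · intro j k
      rw [← Finset.univ_inter (Finset.Iic k), ← Finset.sum_ite_mem]
      simp only [hA]
      fin_cases j <;> fin_cases k <;>
        norm_num [Fin.sum_univ_five, Finset.mem_Iic, Fin.le_def, Matrix.vecHead,
          Matrix.vecTail, Matrix.cons_val_two, Matrix.cons_val_three, Matrix.cons_val_four, show ((3:Fin 5):ℕ) = 3 from rfl, show ((4:Fin 5):ℕ) = 4 from rfl]
    · intro i
      simp only [hA]
      fin_cases i <;> norm_num [Fin.sum_univ_five, Matrix.vecHead, Matrix.vecTail, Matrix.cons_val_two, Matrix.cons_val_three, Matrix.cons_val_four]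
    · intro j
      simp only [hA]
      fin_cases j <;> norm_num [Fin.sum_univ_five, Matrix.vecHead, Matrix.vecTail, Matrix.cons_val_two, Matrix.cons_val_three, Matrix.cons_val_four]
  -- charpoly
  have hchar : Matrix.charpoly A = (X - 1) ^ 2 * (X + 1) * (X ^ 2 - X + 1) := by
    have hcm : A.charmatrix =
        !![X, 0, -1, 0, 0; -1, X, 1, -1, 0; 0, 0, X - 1, 1, -1; 0, 0, 0, X - 1, 0;
           0, -1, 0, 0, X] := by
      rw [hA]
      ext i j : 2
      fin_cases i <;> fin_cases j <;>
        simp [Matrix.charmatrix_apply_eq, Matrix.charmatrix_apply_ne, map_neg, map_one,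
          Matrix.vecHead, Matrix.vecTail]
    rw [Matrix.charpoly, hcm]
    simp [Matrix.det_succ_row_zero, Fin.sum_univ_succ, Fin.succAbove, Fin.lt_def,
      Matrix.vecHead, Matrix.vecTail, -Fin.val_pos_iff]
    ring
  -- minpoly
  have hmin : minpoly ℚ A = (X - 1) * (X + 1) * (X ^ 2 - X + 1) := by
    set q1 : ℚ[X] := X - C 1 with hq1
    set q2 : ℚ[X] := X - C (-1) with hq2
    set q3 : ℚ[X] := X ^ 2 - X + 1 with hq3
    have hq3mon : q3.Monic := by
      rw [hq3]; monicity!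
    have hpmon : (q1 * q2 * q3).Monic :=
      ((monic_X_sub_C (1:ℚ)).mul (monic_X_sub_C (-1:ℚ))).mul hq3mon
    have hprod : (A - 1) * (A + 1) * (A ^ 2 - A + 1) = 0 := by
      have e : (A - 1) * (A + 1) * (A ^ 2 - A + 1) = (A ^ 2 - 1) * (A ^ 2 - A + 1) := by
        noncomm_ring
      rw [e, h2, hA]
      ext i j
      fin_cases i <;> fin_cases j <;>
        norm_num [Matrix.mul_apply, Fin.sum_univ_succ, Matrix.one_apply, Fin.ext_iff,
          Matrix.sub_apply, Matrix.add_apply, -Fin.val_eq_zero_iff]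
    have haev : aeval A (q1 * q2 * q3) = 0 := by
      simp only [hq1, hq2, hq3, map_mul, map_sub, map_add, map_pow, aeval_X, aeval_C,
        map_one, map_neg]
      simpa [sub_neg_eq_add] using hprod
    have hint : IsIntegral ℚ A := ⟨q1 * q2 * q3, hpmon, by rw [← aeval_def]; exact haev⟩
    have hdvd : minpoly ℚ A ∣ q1 * q2 * q3 := minpoly.dvd ℚ A haev
    -- non-units
    have hnu : ∀ M : Matrix (Fin 5) (Fin 5) ℚ, M.det = 0 → ¬ IsUnit M := by
      intro M hM hU
      have := (Matrix.isUnit_iff_isUnit_det M).mp hU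
      rw [hM] at this
      simp at this
    have hd1 : q1 ∣ minpoly ℚ A := by
      apply aux15_dvd_minpoly (Polynomial.irreducible_X_sub_C (1:ℚ))
      have e : aeval A q1 = A - 1 := by simp [hq1]
      rw [e]
      apply hnu
      have e2 : A - 1 = !![-1,0,1,0,0; 1,-1,-1,1,0; 0,0,0,-1,1; 0,0,0,0,0; 0,1,0,0,-1] := by
        rw [hA]; ext i j
        fin_cases i <;> fin_cases j <;>
          norm_num [Matrix.one_apply, Fin.ext_iff, Matrix.sub_apply]
      rw [e2]
      norm_num [Matrix.det_succ_row_zero, Fin.sum_univ_succ, Fin.succAbove, Fin.lt_def,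
        Matrix.vecHead, Matrix.vecTail, Fin.succ, Fin.castSucc, Fin.castAdd, Fin.castLE,
        Matrix.cons_val_zero, Matrix.cons_val_one, Matrix.head_cons, -Fin.val_pos_iff]
    have hd2 : q2 ∣ minpoly ℚ A := by
      apply aux15_dvd_minpoly (Polynomial.irreducible_X_sub_C (-1:ℚ))
      have e : aeval A q2 = A + 1 := by simp [hq2, sub_neg_eq_add]
      rw [e]
      apply hnu
      have e2 : A + 1 = !![1,0,1,0,0; 1,1,-1,1,0; 0,0,2,-1,1; 0,0,0,2,0; 0,1,0,0,1] := by
        rw [hA]; ext i j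
        fin_cases i <;> fin_cases j <;>
          norm_num [Matrix.one_apply, Fin.ext_iff, Matrix.add_apply]
      rw [e2]
      norm_num [Matrix.det_succ_row_zero, Fin.sum_univ_succ, Fin.succAbove, Fin.lt_def,
        Matrix.vecHead, Matrix.vecTail, Fin.succ, Fin.castSucc, Fin.castAdd, Fin.castLE,
        Matrix.cons_val_zero, Matrix.cons_val_one, Matrix.head_cons, -Fin.val_pos_iff]
    have hd3 : q3 ∣ minpoly ℚ A := by
      apply aux15_dvd_minpoly aux15_q3_irr
      have e : aeval A q3 = A ^ 2 - A + 1 := by simp [hq3]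
      rw [e]
      apply hnu
      have e2 : A ^ 2 - A + 1 = !![1,0,0,-1,1; -1,1,1,1,-1; 0,1,1,-1,0; 0,0,0,1,0;
          1,-1,-1,1,1] := by
        rw [h2, hA]; ext i j
        fin_cases i <;> fin_cases j <;>
          norm_num [Matrix.one_apply, Fin.ext_iff, Matrix.sub_apply, Matrix.add_apply]
      rw [e2]
      norm_num [Matrix.det_succ_row_zero, Fin.sum_univ_succ, Fin.succAbove, Fin.lt_def,
        Matrix.vecHead, Matrix.vecTail, Fin.succ, Fin.castSucc, Fin.castAdd, Fin.castLE,
        Matrix.cons_val_zero, Matrix.cons_val_one, Matrix.head_cons, -Fin.val_pos_iff]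
    -- coprimality
    have c12 : IsCoprime q1 q2 := by
      refine (EuclideanDomain.dvd_or_coprime q1 q2
        (Polynomial.irreducible_X_sub_C (1:ℚ))).resolve_left ?_
      rw [hq1, hq2, Polynomial.dvd_iff_isRoot, Polynomial.IsRoot.def]
      norm_num
    have c13 : IsCoprime q1 q3 := by
      refine (EuclideanDomain.dvd_or_coprime q1 q3
        (Polynomial.irreducible_X_sub_C (1:ℚ))).resolve_left ?_
      rw [hq1, hq3, Polynomial.dvd_iff_isRoot, Polynomial.IsRoot.def]
      norm_num
    have c23 : IsCoprime q2 q3 := by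
      refine (EuclideanDomain.dvd_or_coprime q2 q3
        (Polynomial.irreducible_X_sub_C (-1:ℚ))).resolve_left ?_
      rw [hq2, hq3, Polynomial.dvd_iff_isRoot, Polynomial.IsRoot.def]
      norm_num
    have hpdvd : q1 * q2 * q3 ∣ minpoly ℚ A :=
      (c13.mul_left c23).mul_dvd (c12.mul_dvd hd1 hd2) hd3
    have hfin : minpoly ℚ A = q1 * q2 * q3 :=
      eq_of_monic_of_associated (minpoly.monic hint) hpmon (associated_of_dvd_dvd hdvd hpdvd)
    rw [hfin, hq1, hq2, hq3]
    norm_num [sub_neg_eq_add]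
  refine ⟨hasm, h6, hchar, hmin, ?_⟩
  -- not similar to a permutation matrix
  rintro ⟨B, ⟨σ, hσ⟩, S, hS, hB⟩
  have hdet : IsUnit S.det := (Matrix.isUnit_iff_isUnit_det S).mp hS
  have hSi : S * S⁻¹ = 1 := Matrix.mul_nonsing_inv S hdet
  have key : ∀ M N : Matrix (Fin 5) (Fin 5) ℚ,
      (S⁻¹ * M * S) * (S⁻¹ * N * S) = S⁻¹ * (M * N) * S := by
    intro M N
    simp only [Matrix.mul_assoc]
    rw [← Matrix.mul_assoc S S⁻¹ (N * S), hSi, Matrix.one_mul]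
  have hB3 : B ^ 3 = S⁻¹ * A ^ 3 * S := by
    rw [hB, pow_succ, pow_succ, pow_one, key, key]
    conv_rhs => rw [pow_succ, pow_succ, pow_one]
  have htr : Matrix.trace (B ^ 3) = Matrix.trace (A ^ 3) := by
    rw [hB3, Matrix.trace_mul_comm (S⁻¹ * A ^ 3) S, ← Matrix.mul_assoc, hSi, Matrix.one_mul]
  have htrA : Matrix.trace (A ^ 3) = -1 := by
    rw [h3]
    norm_num [Matrix.trace, Fin.sum_univ_five, Matrix.diag, Matrix.vecHead, Matrix.vecTail,
      Matrix.cons_val_two, Matrix.cons_val_three, Matrix.cons_val_four]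
  have hB2e : ∀ i j, (B * B) i j = if σ (σ i) = j then 1 else 0 := aux15_perm_mul hσ hσ
  have hB3e : ∀ i j, (B * B * B) i j = if σ (σ (σ i)) = j then 1 else 0 :=
    aux15_perm_mul hB2e hσ
  have h03 : (0:ℚ) ≤ Matrix.trace (B ^ 3) := by
    rw [pow_succ, pow_succ, pow_one, Matrix.trace]
    apply Finset.sum_nonneg
    intro i _
    rw [Matrix.diag_apply, hB3e]
    split <;> norm_num
  rw [htr, htrA] at h03
  norm_num at h03
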